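/- Lower bound for explaining Lipschitz functions via the pigeonhole principle: if g : [0,1]^d → ℝ takes at most N distinct values, then some level set of g restricted to [0,1]^d has Lebesgue measure at least 1/N; consequently, for the L-Lipschitz function f constructed to vary by L·D along a segment of length D inside that level set (where D is a lower bound on the diameter of any set of measure 1/N), sup_x |f(x) − g(x)| ≥ L·D/2. -/

import Mathlib

open MeasureTheory

set_option maxHeartbeats 1000000

/-- pigeonhole lower bound for explaining Lipschitz functions.
If `g` takes at most `N` distinct values on the unit cube `S`, then some level set of
`g` in `S` has Lebesgue measure at least `1/N`; and for any `f` varying by `L·D`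
between two points of a common level set of `g`, the worst-case error is at least
`L·D/2`. -/
theorem pigeonhole_lipschitz_lower_bound (d N : ℕ) (hN : 0 < N)
    (g : EuclideanSpace ℝ (Fin d) → ℝ)
    (S : Set (EuclideanSpace ℝ (Fin d)))
    (hS : volume S = 1)
    (hfin : (g '' S).Finite) (hcard : (g '' S).ncard ≤ N)
    (L D : ℝ) (hL : 0 ≤ L) (hD : 0 ≤ D) :
    (∃ y : ℝ, (1 : ENNReal) / N ≤ volume {x | x ∈ S ∧ g x = y}) ∧
    (∀ (f : EuclideanSpace ℝ (Fin d) → ℝ) (a b : EuclideanSpace ℝ (Fin d)),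
      a ∈ S → b ∈ S → g a = g b → f a - f b = L * D →
      ∃ x ∈ S, L * D / 2 ≤ |f x - g x|) := by
  constructor
  · by_contra h
    push_neg at h
    set F := hfin.toFinset with hF
    have hsub : S ⊆ ⋃ y ∈ F, {x | x ∈ S ∧ g x = y} := by
      intro x hx
      simp only [Set.mem_iUnion]
      exact ⟨g x, hfin.mem_toFinset.mpr (Set.mem_image_of_mem g hx), hx, rfl⟩
    have hne : F.Nonempty := by
      rcases F.eq_empty_or_nonempty with he | hne
      · exfalso
        have : S ⊆ ∅ := by simpa [he] using hsub
        have h0 : volume S = 0 := le_antisymm (by simpa using measure_mono (μ := volume) this) zero_le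
        rw [hS] at h0; exact one_ne_zero h0
      · exact hne
    have hlt : volume S < 1 := by
      calc volume S ≤ volume (⋃ y ∈ F, {x | x ∈ S ∧ g x = y}) := measure_mono hsub
        _ ≤ ∑ y ∈ F, volume {x | x ∈ S ∧ g x = y} := measure_biUnion_finset_le F _
        _ < ∑ _y ∈ F, (1 : ENNReal) / N :=
            ENNReal.sum_lt_sum_of_nonempty hne (fun y _ => h y)
        _ = (F.card : ENNReal) / N := by
            rw [Finset.sum_const, nsmul_eq_mul, mul_one_div]
        _ ≤ (N : ENNReal) / N := by
            apply ENNReal.div_le_div_right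
            have hcF : F.card ≤ N := by
              rw [hF, ← Set.ncard_eq_toFinset_card (g '' S) hfin]; exact hcard
            exact_mod_cast hcF
        _ = 1 := ENNReal.div_self (by exact_mod_cast hN.ne') (by simp)
    rw [hS] at hlt; exact lt_irrefl _ hlt
  · intro f a b ha hb hg hfab
    by_cases hc : L * D / 2 ≤ |f a - g a|
    · exact ⟨a, ha, hc⟩
    · refine ⟨b, hb, ?_⟩
      push_neg at hc
      have h2 : |(f a - g a) - (f b - g b)| = L * D := by
        rw [hg] at *
        have he : (f a - g b) - (f b - g b) = L * D := by linarith
        rw [he, abs_of_nonneg (mul_nonneg hL hD)]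
      have h5 : L * D ≤ |f a - g a| + |f b - g b| :=
        h2 ▸ abs_sub _ _
      linarith
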